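/- Let K = (E, I, c, p, β) be a BMI instance, let 0 < ε < 1/2, and let R ⊆ E be a representative set of K and ε. Then there exists a solution S of K such that (1) S ∩ H ⊆ R and (2) p(S) ≥ (1 − 3ε)·OPT(K). -/

import Mathlib

open Finset
open scoped Classical

/-- A budgeted matroid independent set (BMI) instance: a matroid `(E, Indep)` on a
finite ground set in which every singleton is independent, a budget `budget > 0`,
a cost function `cost : E → [0, budget]`, and a nonnegative profit function
`profit`. -/
structure BMI (E : Type) [Fintype E] [DecidableEq E] where
  Indep : Finset E → Prop
  indep_empty : Indep ∅
  indep_subset : ∀ ⦃A B : Finset E⦄, Indep A → B ⊆ A → Indep B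
  indep_exchange : ∀ ⦃A B : Finset E⦄, Indep A → Indep B → B.card < A.card →
    ∃ e ∈ A \ B, Indep (insert e B)
  indep_singleton : ∀ e : E, Indep {e}
  budget : ℝ
  budget_pos : 0 < budget
  cost : E → ℝ
  cost_nonneg : ∀ e, 0 ≤ cost e
  cost_le_budget : ∀ e, cost e ≤ budget
  profit : E → ℝ
  profit_nonneg : ∀ e, 0 ≤ profit e

variable {E : Type} [Fintype E] [DecidableEq E]

/-- A solution of a BMI instance: an independent set of total cost at most the budget. -/
def BMI.IsSolution (K : BMI E) (X : Finset E) : Prop :=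
  K.Indep X ∧ ∑ e ∈ X, K.cost e ≤ K.budget

/-- `OPT(K)`: the maximal profit of a solution of `K`. -/
noncomputable def BMI.opt (K : BMI E) : ℝ :=
  sSup {v : ℝ | ∃ X : Finset E, K.IsSolution X ∧ v = ∑ e ∈ X, K.profit e}

/-- `q(ε) = ε^{-1/ε}` (a real power). -/
noncomputable def qe (ε : ℝ) : ℝ := ε ^ (-(1/ε))

/-- The set `H` of profitable elements: those with `p(e) > ε·OPT(K)`. -/
noncomputable def BMI.H (K : BMI E) (ε : ℝ) : Finset E :=
  univ.filter (fun e => ε * K.opt < K.profit e)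

/-- `A ∈ I_{≤ q(ε)}`: `A` is independent and `|A| ≤ q(ε)`. -/
def BMI.IndepLe (K : BMI E) (ε : ℝ) (A : Finset E) : Prop :=
  K.Indep A ∧ (A.card : ℝ) ≤ qe ε

/-- `Z` is a replacement of `G` for `K` and `ε`. -/
noncomputable def BMI.IsReplacement (K : BMI E) (ε : ℝ) (G Z : Finset E) : Prop :=
  K.IndepLe ε ((G \ K.H ε) ∪ Z) ∧
  ∑ e ∈ Z, K.cost e ≤ ∑ e ∈ G ∩ K.H ε, K.cost e ∧
  (1 - ε) * ∑ e ∈ G, K.profit e ≤ ∑ e ∈ (G \ K.H ε) ∪ Z, K.profit e ∧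
  Z.card ≤ (G ∩ K.H ε).card

/-- `R` is a representative set of `K` and `ε`: every `G ∈ I_{≤ q(ε)}` has a
replacement contained in `R`. -/
noncomputable def BMI.IsRepresentative (K : BMI E) (ε : ℝ) (R : Finset E) : Prop :=
  ∀ G : Finset E, K.IndepLe ε G → ∃ Z ⊆ R, K.IsReplacement ε G Z

/-- Matroid augmentation: any independent set `A` can be augmented from an
independent set `B` to an independent set of cardinality at least `|B|`. -/
lemma BMI.augment (K : BMI E) :
    ∀ n (A B : Finset E), K.Indep A → K.Indep B → B.card ≤ A.card + n →
      ∃ C, A ⊆ C ∧ C ⊆ A ∪ B ∧ K.Indep C ∧ B.card ≤ C.card := by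
  intro n
  induction n with
  | zero =>
    intro A B hA _ h
    exact ⟨A, subset_rfl, subset_union_left, hA, by simpa using h⟩
  | succ n ih =>
    intro A B hA hB h
    by_cases hc : B.card ≤ A.card
    · exact ⟨A, subset_rfl, subset_union_left, hA, hc⟩
    · obtain ⟨e, he, hi⟩ := K.indep_exchange hB hA (not_le.mp hc)
      obtain ⟨heB, heA⟩ := Finset.mem_sdiff.mp he
      obtain ⟨C, h1, h2, h3, h4⟩ := ih (insert e A) B hi hB (by
        rw [Finset.card_insert_of_notMem heA]; omega)
      refine ⟨C, (Finset.subset_insert e A).trans h1, fun x hx => ?_, h3, h4⟩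
      rcases Finset.mem_union.mp (h2 hx) with hx' | hx'
      · rcases Finset.mem_insert.mp hx' with rfl | hx''
        · exact Finset.mem_union_right _ heB
        · exact Finset.mem_union_left _ hx''
      · exact Finset.mem_union_right _ hx'

/-- **Lemma 3.3.** If `R` is a representative set of `K` and `ε`,
then there is a solution `S` of `K` with `S ∩ H ⊆ R` and
`p(S) ≥ (1 - 3ε)·OPT(K)`. -/
theorem exists_good_solution_in_representative (K : BMI E) (ε : ℝ)
    (hε : 0 < ε) (hε2 : ε < 1/2) (R : Finset E) (hR : K.IsRepresentative ε R) :
    ∃ S : Finset E, K.IsSolution S ∧ S ∩ K.H ε ⊆ R ∧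
      (1 - 3*ε) * K.opt ≤ ∑ e ∈ S, K.profit e := by
  classical
  -- Basic facts about OPT
  set Vs : Set ℝ := {v : ℝ | ∃ X : Finset E, K.IsSolution X ∧ v = ∑ e ∈ X, K.profit e}
    with hVs
  have hfin : Vs.Finite :=
    Set.Finite.subset (Set.finite_range fun X : Finset E => ∑ e ∈ X, K.profit e)
      (by rintro v ⟨X, _, rfl⟩; exact ⟨X, rfl⟩)
  have hempty_sol : K.IsSolution (∅ : Finset E) :=
    ⟨K.indep_empty, by simpa using K.budget_pos.le⟩
  have hne : Vs.Nonempty := ⟨0, ∅, hempty_sol, by simp⟩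
  have hub : ∀ X : Finset E, K.IsSolution X → ∑ e ∈ X, K.profit e ≤ K.opt := by
    intro X hX
    exact le_csSup hfin.bddAbove ⟨X, hX, rfl⟩
  have h0 : (0 : ℝ) ≤ K.opt := by
    have := hub ∅ hempty_sol; simpa using this
  have hmem : K.opt ∈ Vs := hne.csSup_mem hfin
  obtain ⟨T, hTsol, hTval⟩ := hmem
  -- Trivial case
  by_cases htriv : (1 - 3*ε) * K.opt ≤ 0
  · exact ⟨∅, hempty_sol, by simp, by simpa using htriv⟩
  push_neg at htriv
  have hopt : 0 < K.opt := by
    rcases mul_pos_iff.mp htriv with ⟨_, h2⟩ | ⟨_, h2⟩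
    · exact h2
    · linarith
  have hε3 : 0 < 1 - 3*ε := by
    rcases mul_pos_iff.mp htriv with ⟨h1, _⟩ | ⟨h1, _⟩
    · exact h1
    · linarith
  -- Setup
  set δ : ℝ := ε^2 * K.opt with hδdef
  have hδpos : 0 < δ := by positivity
  have hδle : δ ≤ ε * K.opt := by nlinarith
  set Hf := K.H ε with hHf
  set F : Finset E := T \ Hf with hFdef
  set G : Finset E := T.filter (fun e => δ < K.profit e) with hGdef
  have hGT : G ⊆ T := Finset.filter_subset _ _
  have hGind : K.Indep G := K.indep_subset hTsol.1 hGT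
  -- cardinality bound for G
  have hGcard : (G.card : ℝ) ≤ qe ε := by
    have hsum1 : (G.card : ℝ) * δ ≤ ∑ e ∈ G, K.profit e := by
      have := Finset.card_nsmul_le_sum G K.profit δ
        (fun e he => (Finset.mem_filter.mp he).2.le)
      simpa [nsmul_eq_mul] using this
    have hsum2 : ∑ e ∈ G, K.profit e ≤ K.opt := by
      rw [hTval]
      exact Finset.sum_le_sum_of_subset_of_nonneg hGT
        (fun e _ _ => K.profit_nonneg e)
    have hc1 : (G.card : ℝ) * ε^2 ≤ 1 := by
      have h' : (G.card : ℝ) * (ε^2 * K.opt) ≤ 1 * K.opt := by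
        rw [one_mul, ← hδdef]
        exact hsum1.trans hsum2
      have := (mul_le_mul_iff_of_pos_right hopt).mp (by linarith [h'] : (G.card : ℝ) * ε^2 * K.opt ≤ 1 * K.opt)
      linarith
    have hq1 : ((ε:ℝ)^2)⁻¹ ≤ qe ε := by
      have hεle1 : ε ≤ 1 := by linarith
      have h2ε : 2 - 1/ε ≤ 0 := by
        have h1 : 2 ≤ 1/ε := by
          rw [le_div_iff₀ hε]; linarith
        linarith
      have hmid : (1:ℝ) ≤ ε ^ ((2:ℝ) - 1/ε) :=
        Real.one_le_rpow_of_pos_of_le_one_of_nonpos hε hεle1 h2ε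
      have hsplit : qe ε = ε ^ ((2:ℝ) - 1/ε) * ε ^ (-(2:ℝ)) := by
        rw [qe, ← Real.rpow_add hε]; ring_nf
      have hneg2 : ε ^ (-(2:ℝ)) = ((ε:ℝ)^2)⁻¹ := by
        rw [Real.rpow_neg hε.le, Real.rpow_two]
      rw [hsplit, hneg2]
      nlinarith [inv_pos.mpr (by positivity : (0:ℝ) < ε^2)]
    have hcard_inv : (G.card : ℝ) ≤ ((ε:ℝ)^2)⁻¹ := by
      have hinv : ((ε:ℝ)^2)⁻¹ * ε^2 = 1 := inv_mul_cancel₀ (by positivity)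
      nlinarith [hc1]
    linarith
  -- Apply representative property
  obtain ⟨Z, hZR, rp1, rp2, rp3, rp4⟩ := hR G ⟨hGind, hGcard⟩
  set D : Finset E := G \ Hf with hDdef
  set A : Finset E := (G \ K.H ε) ∪ Z with hAdef
  have hA_DZ : A = D ∪ Z := by rw [hAdef, hDdef, hHf]
  have hDF : D ⊆ F := by
    intro e he
    obtain ⟨heG, heH⟩ := Finset.mem_sdiff.mp he
    exact Finset.mem_sdiff.mpr ⟨hGT heG, heH⟩
  have hFind : K.Indep F := K.indep_subset hTsol.1 (Finset.sdiff_subset)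
  -- G ∩ H = T ∩ H
  have hGH_TH : G ∩ Hf = T ∩ Hf := by
    ext e
    simp only [Finset.mem_inter, hGdef, Finset.mem_filter]
    constructor
    · rintro ⟨⟨h1, _⟩, h2⟩; exact ⟨h1, h2⟩
    · rintro ⟨h1, h2⟩
      have hpe : ε * K.opt < K.profit e := by
        have h2' := h2
        rw [hHf, BMI.H, Finset.mem_filter] at h2'
        exact h2'.2
      exact ⟨⟨h1, lt_of_le_of_lt hδle hpe⟩, h2⟩
  -- Augment A from F
  obtain ⟨S, hAS, hSsub, hSind, hFS⟩ :=
    K.augment F.card A F (rp1.1) hFind (by omega)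
  refine ⟨S, ⟨hSind, ?_⟩, ?_, ?_⟩
  -- Cost bound
  · have hSF_Z : S \ F ⊆ Z := by
      intro e he
      obtain ⟨heS, heF⟩ := Finset.mem_sdiff.mp he
      rcases Finset.mem_union.mp (hSsub heS) with h | h
      · rw [hA_DZ] at h
        rcases Finset.mem_union.mp h with h' | h'
        · exact absurd (hDF h') heF
        · exact h'
      · exact absurd h heF
    have hc1 : ∑ e ∈ S ∩ F, K.cost e + ∑ e ∈ S \ F, K.cost e = ∑ e ∈ S, K.cost e :=
      Finset.sum_inter_add_sum_sdiff S F K.cost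
    have hc2 : ∑ e ∈ S \ F, K.cost e ≤ ∑ e ∈ Z, K.cost e :=
      Finset.sum_le_sum_of_subset_of_nonneg hSF_Z (fun e _ _ => K.cost_nonneg e)
    have hc3 : ∑ e ∈ S ∩ F, K.cost e ≤ ∑ e ∈ F, K.cost e :=
      Finset.sum_le_sum_of_subset_of_nonneg Finset.inter_subset_right
        (fun e _ _ => K.cost_nonneg e)
    have hc4 : ∑ e ∈ T ∩ Hf, K.cost e + ∑ e ∈ T \ Hf, K.cost e = ∑ e ∈ T, K.cost e :=
      Finset.sum_inter_add_sum_sdiff T Hf K.cost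
    have hc5 : ∑ e ∈ Z, K.cost e ≤ ∑ e ∈ T ∩ Hf, K.cost e := by
      rw [← hGH_TH]; simpa [hHf] using rp2
    have hc6 : ∑ e ∈ T, K.cost e ≤ K.budget := hTsol.2
    rw [← hFdef] at hc4
    linarith [hc1, hc2, hc3, hc4, hc5, hc6]
  -- S ∩ H ⊆ R
  · intro e he
    obtain ⟨heS, heH⟩ := Finset.mem_inter.mp he
    rcases Finset.mem_union.mp (hSsub heS) with h | h
    · rw [hA_DZ] at h
      rcases Finset.mem_union.mp h with h' | h'
      · exact absurd heH (by simpa [hHf] using (Finset.mem_sdiff.mp (hDF h')).2)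
      · exact hZR h'
    · exact absurd heH (by simpa [hHf] using (Finset.mem_sdiff.mp h).2)
  -- Profit bound
  · set hh : ℕ := (G ∩ Hf).card with hhdef
    -- small elements bound
    have hFD_small : ∀ e ∈ F \ D, K.profit e ≤ δ := by
      intro e he
      obtain ⟨heF, heD⟩ := Finset.mem_sdiff.mp he
      obtain ⟨heT, heH⟩ := Finset.mem_sdiff.mp heF
      by_contra hlt
      push_neg at hlt
      exact heD (Finset.mem_sdiff.mpr ⟨Finset.mem_filter.mpr ⟨heT, hlt⟩, heH⟩)
    have key : ∀ W : Finset E, W ⊆ F \ D → W.card ≤ hh →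
        ∑ e ∈ W, K.profit e ≤ (hh : ℝ) * δ := by
      intro W hW hWc
      calc ∑ e ∈ W, K.profit e ≤ W.card • δ :=
            Finset.sum_le_card_nsmul W K.profit δ (fun e he => hFD_small e (hW he))
        _ = (W.card : ℝ) * δ := by rw [nsmul_eq_mul]
        _ ≤ (hh : ℝ) * δ := by
            apply mul_le_mul_of_nonneg_right _ hδpos.le
            exact_mod_cast hWc
    -- hh * δ ≤ ε * OPT
    have hhδ : (hh : ℝ) * δ ≤ ε * K.opt := by
      have h1 : (hh : ℝ) * (ε * K.opt) ≤ ∑ e ∈ G ∩ Hf, K.profit e := by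
        have := Finset.card_nsmul_le_sum (G ∩ Hf) K.profit (ε * K.opt)
          (fun e he => by
            have heH := Finset.mem_inter.mp he |>.2
            rw [hHf, BMI.H, Finset.mem_filter] at heH
            exact heH.2.le)
        simpa [nsmul_eq_mul, hhdef] using this
      have h2 : ∑ e ∈ G ∩ Hf, K.profit e ≤ K.opt := by
        rw [hTval]
        exact Finset.sum_le_sum_of_subset_of_nonneg
          (Finset.inter_subset_left.trans hGT) (fun e _ _ => K.profit_nonneg e)
      have h3 : (hh : ℝ) * ε ≤ 1 := by
        have := (mul_le_mul_iff_of_pos_right hopt).mp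
          (by linarith : (hh : ℝ) * ε * K.opt ≤ 1 * K.opt)
        linarith
      calc (hh : ℝ) * δ = ((hh : ℝ) * ε) * (ε * K.opt) := by rw [hδdef]; ring
        _ ≤ 1 * (ε * K.opt) := by
            apply mul_le_mul_of_nonneg_right h3 (by positivity)
        _ = ε * K.opt := one_mul _
    -- cardinality facts
    have hSF_Z : S \ F ⊆ Z := by
      intro e he
      obtain ⟨heS, heF⟩ := Finset.mem_sdiff.mp he
      rcases Finset.mem_union.mp (hSsub heS) with h | h
      · rw [hA_DZ] at h
        rcases Finset.mem_union.mp h with h' | h'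
        · exact absurd (hDF h') heF
        · exact h'
      · exact absurd h heF
    have hcard_FS : (F \ S).card ≤ hh := by
      have e1 : (F ∩ S).card + (F \ S).card = F.card := Finset.card_inter_add_card_sdiff F S
      have e2 : (S ∩ F).card + (S \ F).card = S.card := Finset.card_inter_add_card_sdiff S F
      have e3 : (S \ F).card ≤ Z.card := Finset.card_le_card hSF_Z
      have e4 : Z.card ≤ hh := by simpa [hhdef, hHf] using rp4
      have e5 : (F ∩ S).card = (S ∩ F).card := by rw [Finset.inter_comm]
      omega
    -- profit decompositions
    have hp1 : ∑ e ∈ S \ A, K.profit e + ∑ e ∈ A, K.profit e = ∑ e ∈ S, K.profit e :=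
      Finset.sum_sdiff hAS
    have hp2 : ∑ e ∈ (F \ A) ∩ (F \ S), K.profit e + ∑ e ∈ (F \ A) \ (F \ S), K.profit e
        = ∑ e ∈ F \ A, K.profit e :=
      Finset.sum_inter_add_sum_sdiff (F \ A) (F \ S) K.profit
    have hp3 : ∑ e ∈ (F \ A) \ (F \ S), K.profit e ≤ ∑ e ∈ S \ A, K.profit e := by
      apply Finset.sum_le_sum_of_subset_of_nonneg _ (fun e _ _ => K.profit_nonneg e)
      intro e he
      obtain ⟨heFA, heFS⟩ := Finset.mem_sdiff.mp he
      obtain ⟨heF, heA⟩ := Finset.mem_sdiff.mp heFA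
      have heS : e ∈ S := by
        by_contra hc
        exact heFS (Finset.mem_sdiff.mpr ⟨heF, hc⟩)
      exact Finset.mem_sdiff.mpr ⟨heS, heA⟩
    have hp4 : ∑ e ∈ (F \ A) ∩ (F \ S), K.profit e ≤ (hh : ℝ) * δ := by
      apply key
      · intro e he
        obtain ⟨heFA, _⟩ := Finset.mem_inter.mp he
        obtain ⟨heF, heA⟩ := Finset.mem_sdiff.mp heFA
        refine Finset.mem_sdiff.mpr ⟨heF, fun hD => heA ?_⟩
        rw [hA_DZ]; exact Finset.mem_union_left _ hD
      · calc ((F \ A) ∩ (F \ S)).card ≤ (F \ S).card :=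
              Finset.card_le_card Finset.inter_subset_right
          _ ≤ hh := hcard_FS
    have hp5 : ∑ e ∈ F ∩ A, K.profit e + ∑ e ∈ F \ A, K.profit e = ∑ e ∈ F, K.profit e :=
      Finset.sum_inter_add_sum_sdiff F A K.profit
    -- F ∩ A ⊆ D ∪ (F ∩ (Z \ D)), disjoint union
    have hp6 : ∑ e ∈ F ∩ A, K.profit e
        ≤ ∑ e ∈ D, K.profit e + ∑ e ∈ F ∩ (Z \ D), K.profit e := by
      have hsub : F ∩ A ⊆ D ∪ (F ∩ (Z \ D)) := by
        intro e he
        obtain ⟨heF, heA⟩ := Finset.mem_inter.mp he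
        rw [hA_DZ] at heA
        rcases Finset.mem_union.mp heA with h | h
        · exact Finset.mem_union_left _ h
        · by_cases hD : e ∈ D
          · exact Finset.mem_union_left _ hD
          · exact Finset.mem_union_right _
              (Finset.mem_inter.mpr ⟨heF, Finset.mem_sdiff.mpr ⟨h, hD⟩⟩)
      have hdisj : Disjoint D (F ∩ (Z \ D)) := by
        apply Finset.disjoint_left.mpr
        intro e heD heI
        exact (Finset.mem_sdiff.mp (Finset.mem_inter.mp heI).2).2 heD
      calc ∑ e ∈ F ∩ A, K.profit e ≤ ∑ e ∈ D ∪ (F ∩ (Z \ D)), K.profit e :=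
            Finset.sum_le_sum_of_subset_of_nonneg hsub (fun e _ _ => K.profit_nonneg e)
        _ = ∑ e ∈ D, K.profit e + ∑ e ∈ F ∩ (Z \ D), K.profit e :=
            Finset.sum_union hdisj
    have hp7 : ∑ e ∈ F ∩ (Z \ D), K.profit e ≤ (hh : ℝ) * δ := by
      apply key
      · intro e he
        obtain ⟨heF, heZD⟩ := Finset.mem_inter.mp he
        exact Finset.mem_sdiff.mpr ⟨heF, (Finset.mem_sdiff.mp heZD).2⟩
      · calc (F ∩ (Z \ D)).card ≤ (Z \ D).card :=
              Finset.card_le_card Finset.inter_subset_right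
          _ ≤ Z.card := Finset.card_le_card Finset.sdiff_subset
          _ ≤ hh := by simpa [hhdef, hHf] using rp4
    -- G partition
    have hp8 : ∑ e ∈ G ∩ Hf, K.profit e + ∑ e ∈ G \ Hf, K.profit e = ∑ e ∈ G, K.profit e :=
      Finset.sum_inter_add_sum_sdiff G Hf K.profit
    -- T partition
    have hp9 : ∑ e ∈ T ∩ Hf, K.profit e + ∑ e ∈ T \ Hf, K.profit e = ∑ e ∈ T, K.profit e :=
      Finset.sum_inter_add_sum_sdiff T Hf K.profit
    have hPGopt : ∑ e ∈ G, K.profit e ≤ K.opt := by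
      rw [hTval]
      exact Finset.sum_le_sum_of_subset_of_nonneg hGT (fun e _ _ => K.profit_nonneg e)
    have hrp3 : (1 - ε) * ∑ e ∈ G, K.profit e ≤ ∑ e ∈ A, K.profit e := by
      simpa [hAdef] using rp3
    have hPGH : ∑ e ∈ G ∩ Hf, K.profit e = ∑ e ∈ T ∩ Hf, K.profit e := by rw [hGH_TH]
    have hεPG : ε * ∑ e ∈ G, K.profit e ≤ ε * K.opt :=
      mul_le_mul_of_nonneg_left hPGopt hε.le
    -- assemble
    have hD_eq : ∑ e ∈ G \ Hf, K.profit e = ∑ e ∈ D, K.profit e := by rw [hDdef]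
    have hF_eq : ∑ e ∈ T \ Hf, K.profit e = ∑ e ∈ F, K.profit e := by rw [hFdef]
    rw [hTval] at hhδ hεPG ⊢
    linarith [hp1, hp2, hp3, hp4, hp5, hp6, hp7, hp8, hp9, hrp3, hεPG, hhδ, hD_eq, hF_eq, hPGH]
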